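/- Let G = S_3, H = k^{S_3}, m ∈ {2,3}, and C_m ≤ S_3 a cyclic subgroup (C_2 = ⟨(12)⟩ or C_3 = ⟨(123)⟩) forming a matched pair (C_m, S_3) with group Σ = C_m ⋉ S_3. Let V be the Yetter–Drinfeld module over k^{S_3} spanned by {y_η : η ∈ X}, X the transpositions, with the standard action and signed coaction. Extend the action to the abelian extension H' = k^{S_3} * kC_m by f · y_η = y_{f η f^{-1}} for f ∈ C_m, and extend the coaction via the inclusion k^{S_3} ⊆ H'. Then V is a Yetter–Drinfeld module over H', i.e. the compatibility δ(f·v) = f₁ v₍₋₁₎ S(f₃) ⊗ f₂ · v₍₀₎ holds. -/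
import Mathlib


open TensorProduct LinearMap

section Generic
variable (k : Type*) [Field k]
variable {A : Type*} [AddCommGroup A] [Module k A]

/-- Componentwise multiplication on `A ⊗ A` induced by a multiplication `m` on `A`. -/
noncomputable def mulTwo (m : A ⊗[k] A →ₗ[k] A) :
    (A ⊗[k] A) ⊗[k] (A ⊗[k] A) →ₗ[k] A ⊗[k] A :=
  (TensorProduct.map m m) ∘ₗ (TensorProduct.tensorTensorTensorComm k A A A A).toLinearMap

/-- Componentwise multiplication on `A ⊗ (A ⊗ A)`. -/
noncomputable def mulThree (m : A ⊗[k] A →ₗ[k] A) :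
    (A ⊗[k] (A ⊗[k] A)) ⊗[k] (A ⊗[k] (A ⊗[k] A)) →ₗ[k] A ⊗[k] (A ⊗[k] A) :=
  (TensorProduct.map m (mulTwo k m)) ∘ₗ
    (TensorProduct.tensorTensorTensorComm k A (A ⊗[k] A) A (A ⊗[k] A)).toLinearMap

/-- Componentwise multiplication on `(A ⊗ A) ⊗ A`. -/
noncomputable def mulThree' (m : A ⊗[k] A →ₗ[k] A) :
    ((A ⊗[k] A) ⊗[k] A) ⊗[k] ((A ⊗[k] A) ⊗[k] A) →ₗ[k] (A ⊗[k] A) ⊗[k] A :=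
  (TensorProduct.map (mulTwo k m) m) ∘ₗ
    (TensorProduct.tensorTensorTensorComm k (A ⊗[k] A) A (A ⊗[k] A) A).toLinearMap

/-- `J` is a (Drinfeld) twist with inverse `J'` for the bialgebra structure
`(m, one, Δ, ε)` on `A`:  `J` is invertible, satisfies
`(1 ⊗ J)·(id ⊗ Δ)(J) = (J ⊗ 1)·(Δ ⊗ id)(J)` and `(id ⊗ ε)(J) = (ε ⊗ id)(J) = 1`. -/
noncomputable def IsTwist (m : A ⊗[k] A →ₗ[k] A) (one : A)
    (Δ : A →ₗ[k] A ⊗[k] A) (ε : A →ₗ[k] k) (J J' : A ⊗[k] A) : Prop :=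
  mulTwo k m (J ⊗ₜ[k] J') = one ⊗ₜ[k] one ∧
  mulTwo k m (J' ⊗ₜ[k] J) = one ⊗ₜ[k] one ∧
  mulThree k m ((one ⊗ₜ[k] J) ⊗ₜ[k] (LinearMap.lTensor A Δ J)) =
    (TensorProduct.assoc k A A A)
      (mulThree' k m ((J ⊗ₜ[k] one) ⊗ₜ[k] (LinearMap.rTensor A Δ J))) ∧
  (TensorProduct.rid k A) (LinearMap.lTensor A ε J) = one ∧
  (TensorProduct.lid k A) (LinearMap.rTensor A ε J) = one

/-- The twisted comultiplication `x ↦ J · Δ(x) · J'` (where multiplication on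
`A ⊗ A` is componentwise via `μ = mulTwo m`). -/
noncomputable def conjComulWith (μ : (A ⊗[k] A) ⊗[k] (A ⊗[k] A) →ₗ[k] A ⊗[k] A)
    (Δ : A →ₗ[k] A ⊗[k] A) (J J' : A ⊗[k] A) : A →ₗ[k] A ⊗[k] A :=
  μ ∘ₗ (TensorProduct.mk k (A ⊗[k] A) (A ⊗[k] A) J) ∘ₗ μ ∘ₗ
    ((TensorProduct.mk k (A ⊗[k] A) (A ⊗[k] A)).flip J') ∘ₗ Δ

/-- The (unbraided) comultiplication on `A ⊗ A` induced by `Δ`. -/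
noncomputable def comulTwo (Δ : A →ₗ[k] A ⊗[k] A) :
    A ⊗[k] A →ₗ[k] (A ⊗[k] A) ⊗[k] (A ⊗[k] A) :=
  (TensorProduct.tensorTensorTensorComm k A A A A).toLinearMap ∘ₗ TensorProduct.map Δ Δ

/-- Convolution product of two functionals on `A ⊗ A`, with respect to `Δ`. -/
noncomputable def convTwo (Δ : A →ₗ[k] A ⊗[k] A) (τ τ' : A ⊗[k] A →ₗ[k] k) :
    A ⊗[k] A →ₗ[k] k :=
  (LinearMap.mul' k k) ∘ₗ (TensorProduct.map τ τ') ∘ₗ comulTwo k Δ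

/-- The left hand side `σ(x₁,y₁)σ(x₂y₂,z)` of the Hopf 2-cocycle condition,
as a functional on `A ⊗ (A ⊗ A)`. -/
noncomputable def cocycleLHS (m : A ⊗[k] A →ₗ[k] A) (Δ : A →ₗ[k] A ⊗[k] A)
    (σ : A ⊗[k] A →ₗ[k] k) : A ⊗[k] (A ⊗[k] A) →ₗ[k] k :=
  (LinearMap.mul' k k)
    ∘ₗ (TensorProduct.map σ (σ ∘ₗ LinearMap.rTensor A m))
    ∘ₗ (TensorProduct.assoc k (A ⊗[k] A) (A ⊗[k] A) A).toLinearMap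
    ∘ₗ (LinearMap.rTensor A (TensorProduct.tensorTensorTensorComm k A A A A).toLinearMap)
    ∘ₗ (TensorProduct.assoc k (A ⊗[k] A) (A ⊗[k] A) A).symm.toLinearMap
    ∘ₗ (TensorProduct.map Δ (TensorProduct.map Δ LinearMap.id))

/-- The right hand side `σ(y₁,z₁)σ(x,y₂z₂)` of the Hopf 2-cocycle condition,
as a functional on `A ⊗ (A ⊗ A)`. -/
noncomputable def cocycleRHS (m : A ⊗[k] A →ₗ[k] A) (Δ : A →ₗ[k] A ⊗[k] A)
    (σ : A ⊗[k] A →ₗ[k] k) : A ⊗[k] (A ⊗[k] A) →ₗ[k] k :=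
  (LinearMap.mul' k k)
    ∘ₗ (TensorProduct.map σ σ)
    ∘ₗ (TensorProduct.leftComm k A (A ⊗[k] A) A).toLinearMap
    ∘ₗ (LinearMap.lTensor A (LinearMap.lTensor (A ⊗[k] A) m))
    ∘ₗ (LinearMap.lTensor A (TensorProduct.tensorTensorTensorComm k A A A A).toLinearMap)
    ∘ₗ (LinearMap.lTensor A (TensorProduct.map Δ Δ))

/-- `σ` is a normalized, convolution-invertible Hopf 2-cocycle on the bialgebra
structure `(m, one, Δ, ε)` on `A`. -/
noncomputable def IsHopfTwoCocycle (m : A ⊗[k] A →ₗ[k] A) (one : A)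
    (Δ : A →ₗ[k] A ⊗[k] A) (ε : A →ₗ[k] k) (σ : A ⊗[k] A →ₗ[k] k) : Prop :=
  (∃ σ' : A ⊗[k] A →ₗ[k] k,
      convTwo k Δ σ σ' = (LinearMap.mul' k k) ∘ₗ TensorProduct.map ε ε ∧
      convTwo k Δ σ' σ = (LinearMap.mul' k k) ∘ₗ TensorProduct.map ε ε) ∧
  cocycleLHS k m Δ σ = cocycleRHS k m Δ σ ∧
  (∀ x : A, σ (x ⊗ₜ[k] one) = ε x) ∧
  (∀ x : A, σ (one ⊗ₜ[k] x) = ε x)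

end Generic

section MatchedPair

open scoped Classical

/-- Conjugation `τ ↦ ω⁻¹ τ ω` on the set of transpositions. -/
noncomputable def conjSwap {n : ℕ} (ω : Equiv.Perm (Fin n))
    (τ : {s : Equiv.Perm (Fin n) // s.IsSwap}) :
    {s : Equiv.Perm (Fin n) // s.IsSwap} :=
  ⟨ω⁻¹ * τ.1 * ω, by
    obtain ⟨a, b, hab, h⟩ := τ.2
    exact ⟨ω⁻¹ a, ω⁻¹ b, fun hc => hab (ω⁻¹.injective hc), by
      rw [h, mul_assoc, Equiv.swap_mul_eq_mul_swap, ← mul_assoc, inv_mul_cancel, one_mul]⟩⟩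

variable {k : Type*} [Field k] {H : Type*} [Ring H] [HopfAlgebra k H]
variable {V : Type*} [AddCommGroup V] [Module k V]

/-- `(h ⊗ v) ↦ δ(h·v)`. -/
noncomputable def ydLHS (act : H →ₗ[k] V →ₗ[k] V) (coact : V →ₗ[k] H ⊗[k] V) :
    H ⊗[k] V →ₗ[k] H ⊗[k] V :=
  coact ∘ₗ TensorProduct.lift act

/-- The sandwich map `(h₁ ⊗ h₃) ⊗ a ↦ h₁ a S(h₃)`. -/
noncomputable def sandwich : (H ⊗[k] H) ⊗[k] H →ₗ[k] H :=
  (LinearMap.mul' k H)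
    ∘ₗ (LinearMap.rTensor H (LinearMap.mul' k H))
    ∘ₗ (TensorProduct.assoc k H H H).symm.toLinearMap
    ∘ₗ (LinearMap.lTensor H (TensorProduct.comm k H H).toLinearMap)
    ∘ₗ (TensorProduct.assoc k H H H).toLinearMap
    ∘ₗ (LinearMap.rTensor H (LinearMap.lTensor H (HopfAlgebra.antipode (R := k))))

/-- `(h ⊗ v) ↦ h₁ v₍₋₁₎ S(h₃) ⊗ h₂ · v₍₀₎`. -/
noncomputable def ydRHS (act : H →ₗ[k] V →ₗ[k] V) (coact : V →ₗ[k] H ⊗[k] V) :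
    H ⊗[k] V →ₗ[k] H ⊗[k] V :=
  (TensorProduct.map sandwich (TensorProduct.lift act))
    ∘ₗ (TensorProduct.tensorTensorTensorComm k (H ⊗[k] H) H H V).toLinearMap
    ∘ₗ (TensorProduct.map (TensorProduct.assoc k H H H).symm.toLinearMap LinearMap.id)
    ∘ₗ (TensorProduct.map (LinearMap.lTensor H (TensorProduct.comm k H H).toLinearMap)
          LinearMap.id)
    ∘ₗ (TensorProduct.map
          ((LinearMap.lTensor H (Coalgebra.comul (R := k))) ∘ₗ Coalgebra.comul (R := k))
          coact)


section AuxA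
variable {k : Type*} [Field k] {H : Type*} [Ring H] [HopfAlgebra k H]
variable (c : Equiv.Perm (Fin 3)) (δ : Equiv.Perm (Fin 3) → H) (t : H)

theorem aux_tpow_delta (htδ : ∀ g, t * δ g = δ (c * g * c⁻¹) * t) (i : ℕ) (g : Equiv.Perm (Fin 3)) :
    t ^ i * δ g = δ (c ^ i * g * (c ^ i)⁻¹) * t ^ i := by
  induction i with
  | zero => simp
  | succ n ih =>
    rw [pow_succ', mul_assoc, ih, ← mul_assoc, htδ, mul_assoc, ← pow_succ']
    congr 2
    group

theorem aux_t_inv (htm : t ^ orderOf c = 1) (i : ℕ) :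
    t ^ i * t ^ ((orderOf c - 1) * i) = 1 := by
  have hm : 0 < orderOf c := orderOf_pos c
  rw [← pow_add]
  have : i + (orderOf c - 1) * i = orderOf c * i := by
    cases' Nat.exists_eq_add_of_lt hm with m hm'
    simp [hm', Nat.add_sub_cancel]
    ring
  rw [this, pow_mul, htm, one_pow]

theorem aux_comul_tpow (hΔt : Coalgebra.comul (R := k) t = t ⊗ₜ[k] t) (i : ℕ) :
    Coalgebra.comul (R := k) (t ^ i) = (t ^ i) ⊗ₜ[k] (t ^ i) := by
  induction i with
  | zero => simp [Algebra.TensorProduct.one_def]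
  | succ n ih => rw [pow_succ, Bialgebra.comul_mul, ih, hΔt,
      Algebra.TensorProduct.tmul_mul_tmul, ← pow_succ]

theorem aux_counit_tpow (hεt : Coalgebra.counit (R := k) t = 1) (i : ℕ) :
    Coalgebra.counit (R := k) (t ^ i) = 1 := by
  induction i with
  | zero => simp
  | succ n ih => rw [pow_succ, Bialgebra.counit_mul, ih, hεt, one_mul]

theorem aux_comul_e
    (hΔδ : ∀ g, Coalgebra.comul (R := k) (δ g)
        = ∑ a : Equiv.Perm (Fin 3), δ a ⊗ₜ[k] δ (a⁻¹ * g))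
    (hΔt : Coalgebra.comul (R := k) t = t ⊗ₜ[k] t) (g : Equiv.Perm (Fin 3)) (i : ℕ) :
    Coalgebra.comul (R := k) (δ g * t ^ i)
      = ∑ a : Equiv.Perm (Fin 3), (δ a * t ^ i) ⊗ₜ[k] (δ (a⁻¹ * g) * t ^ i) := by
  rw [Bialgebra.comul_mul, hΔδ, aux_comul_tpow t hΔt, Finset.sum_mul]
  simp [Algebra.TensorProduct.tmul_mul_tmul]

theorem aux_counit_e
    (hεδ : ∀ g, Coalgebra.counit (R := k) (δ g) = if g = 1 then (1 : k) else 0)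
    (hεt : Coalgebra.counit (R := k) t = 1) (g : Equiv.Perm (Fin 3)) (i : ℕ) :
    Coalgebra.counit (R := k) (δ g * t ^ i) = if g = 1 then (1 : k) else 0 := by
  rw [Bialgebra.counit_mul, aux_counit_tpow t hεt, mul_one, hεδ]

theorem aux_antipode_e
    (hδsum : ∑ ω : Equiv.Perm (Fin 3), δ ω = 1)
    (hδmul : ∀ ω ω', δ ω * δ ω' = if ω = ω' then δ ω else 0)
    (hΔδ : ∀ g, Coalgebra.comul (R := k) (δ g)
        = ∑ a : Equiv.Perm (Fin 3), δ a ⊗ₜ[k] δ (a⁻¹ * g))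
    (hεδ : ∀ g, Coalgebra.counit (R := k) (δ g) = if g = 1 then (1 : k) else 0)
    (hΔt : Coalgebra.comul (R := k) t = t ⊗ₜ[k] t)
    (hεt : Coalgebra.counit (R := k) t = 1)
    (htm : t ^ orderOf c = 1)
    (b : Equiv.Perm (Fin 3)) (i : ℕ) :
    HopfAlgebra.antipode (R := k) (δ b * t ^ i)
      = t ^ ((orderOf c - 1) * i) * δ b⁻¹ := by
  classical
  have A : ∀ g : Equiv.Perm (Fin 3),
      ∑ a : Equiv.Perm (Fin 3),
          HopfAlgebra.antipode (R := k) (δ a * t ^ i) * (δ (a⁻¹ * g) * t ^ i)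
        = if g = 1 then (1 : H) else 0 := by
    intro g
    have h := HopfAlgebra.mul_antipode_rTensor_comul_apply (R := k) (δ g * t ^ i)
    rw [aux_comul_e δ t hΔδ hΔt, aux_counit_e δ t hεδ hεt, map_sum, map_sum] at h
    simp only [rTensor_tmul, mul'_apply] at h
    rw [h]
    split <;> simp
  have B : ∀ g : Equiv.Perm (Fin 3),
      ∑ a : Equiv.Perm (Fin 3),
          HopfAlgebra.antipode (R := k) (δ a * t ^ i) * δ (a⁻¹ * g)
        = if g = 1 then t ^ ((orderOf c - 1) * i) else 0 := by
    intro g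
    have hA := congrArg (· * t ^ ((orderOf c - 1) * i)) (A g)
    simp only [Finset.sum_mul, mul_assoc, aux_t_inv c t htm, mul_one] at hA
    rw [hA]
    split <;> simp
  have C : ∀ h : Equiv.Perm (Fin 3),
      HopfAlgebra.antipode (R := k) (δ b * t ^ i) * δ h
        = if h = b⁻¹ then t ^ ((orderOf c - 1) * i) * δ h else 0 := by
    intro h
    have hB := congrArg (· * δ h) (B (b * h))
    simp only [Finset.sum_mul] at hB
    have key : ∀ a : Equiv.Perm (Fin 3), a ∈ Finset.univ →
        HopfAlgebra.antipode (R := k) (δ a * t ^ i) * δ (a⁻¹ * (b * h)) * δ h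
          = if a = b then HopfAlgebra.antipode (R := k) (δ a * t ^ i) * δ h else 0 := by
      intro a _
      rw [mul_assoc, hδmul]
      by_cases hab : a = b
      · subst hab; simp
      · have hne : a⁻¹ * (b * h) ≠ h := by
          rw [Ne, inv_mul_eq_iff_eq_mul, mul_left_inj]
          exact fun e => hab e.symm
        simp [hab, hne]
    rw [Finset.sum_congr rfl key, Finset.sum_ite_eq' Finset.univ b
        (fun a => HopfAlgebra.antipode (R := k) (δ a * t ^ i) * δ h)] at hB
    simp only [Finset.mem_univ, if_true] at hB
    rw [hB]
    by_cases hh : h = b⁻¹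
    · simp [hh]
    · have : b * h ≠ 1 := by
        rw [Ne, mul_eq_one_iff_inv_eq]
        exact fun e => hh e.symm
      simp [hh, this]
  calc HopfAlgebra.antipode (R := k) (δ b * t ^ i)
      = HopfAlgebra.antipode (R := k) (δ b * t ^ i)
          * ∑ h : Equiv.Perm (Fin 3), δ h := by rw [hδsum, mul_one]
    _ = ∑ h : Equiv.Perm (Fin 3),
          HopfAlgebra.antipode (R := k) (δ b * t ^ i) * δ h := by rw [Finset.mul_sum]
    _ = t ^ ((orderOf c - 1) * i) * δ b⁻¹ := by
        rw [Finset.sum_congr rfl (fun h _ => C h),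
          Finset.sum_ite_eq' Finset.univ b⁻¹
            (fun h => t ^ ((orderOf c - 1) * i) * δ h)]
        simp

end AuxA

-- scratch: explore ydRHS shape
lemma sandwich_tmul {k : Type*} [Field k] {H : Type*} [Ring H] [HopfAlgebra k H]
    (p q r : H) :
    (sandwich : (H ⊗[k] H) ⊗[k] H →ₗ[k] H) ((p ⊗ₜ[k] q) ⊗ₜ[k] r)
      = p * r * HopfAlgebra.antipode (R := k) q := by
  simp [sandwich, mul_assoc]

lemma conjSwap_conjSwap {n : ℕ} (a b : Equiv.Perm (Fin n))
    (η : {s : Equiv.Perm (Fin n) // s.IsSwap}) :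
    conjSwap a (conjSwap b η) = conjSwap (b * a) η := by
  apply Subtype.ext
  show a⁻¹ * (b⁻¹ * η.1 * b) * a = (b * a)⁻¹ * η.1 * (b * a)
  group

lemma conjSwap_one {n : ℕ} (η : {s : Equiv.Perm (Fin n) // s.IsSwap}) :
    conjSwap 1 η = η := by
  apply Subtype.ext
  show 1⁻¹ * η.1 * 1 = η.1
  group

section ActAux
variable {k : Type*} [Field k] {H : Type*} [Ring H] [HopfAlgebra k H]
variable {V : Type*} [AddCommGroup V] [Module k V]
variable (c : Equiv.Perm (Fin 3)) (δ : Equiv.Perm (Fin 3) → H) (t : H)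
variable (act : H →ₗ[k] V →ₗ[k] V) (y : {s : Equiv.Perm (Fin 3) // s.IsSwap} → V)

lemma aux_act_tpow
    (hact1 : ∀ v, act 1 v = v)
    (hactmul : ∀ g h v, act (g * h) v = act g (act h v))
    (hactt : ∀ η, act t (y η) = y (conjSwap c⁻¹ η))
    (i : ℕ) (η : {s : Equiv.Perm (Fin 3) // s.IsSwap}) :
    act (t ^ i) (y η) = y (conjSwap ((c ^ i)⁻¹) η) := by
  induction i with
  | zero => rw [pow_zero, hact1, pow_zero, inv_one, conjSwap_one]
  | succ n ih =>
    rw [pow_succ', hactmul, ih, hactt, conjSwap_conjSwap]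
    congr 2
    rw [pow_succ', mul_inv_rev]

lemma aux_act_e
    (hact1 : ∀ v, act 1 v = v)
    (hactmul : ∀ g h v, act (g * h) v = act g (act h v))
    (hactδ : ∀ τ' η, act (δ τ') (y η) = if τ' = η.1 then y η else 0)
    (hactt : ∀ η, act t (y η) = y (conjSwap c⁻¹ η))
    (b : Equiv.Perm (Fin 3)) (i : ℕ) (η : {s : Equiv.Perm (Fin 3) // s.IsSwap}) :
    act (δ b * t ^ i) (y η)
      = if b = (conjSwap ((c ^ i)⁻¹) η).1 then y (conjSwap ((c ^ i)⁻¹) η) else 0 := by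
  rw [hactmul, aux_act_tpow c t act y hact1 hactmul hactt, hactδ]

end ActAux

section SpanAux
variable {k : Type*} [Field k] {H : Type*} [Ring H] [HopfAlgebra k H]
variable (c : Equiv.Perm (Fin 3)) (δ : Equiv.Perm (Fin 3) → H) (t : H)

lemma aux_span
    (hδsum : ∑ ω : Equiv.Perm (Fin 3), δ ω = 1)
    (hδmul : ∀ ω ω', δ ω * δ ω' = if ω = ω' then δ ω else 0)
    (htδ : ∀ g, t * δ g = δ (c * g * c⁻¹) * t)
    (hgen : Algebra.adjoin k (Set.range δ ∪ {t}) = ⊤) :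
    Submodule.span k {x : H | ∃ g i, x = δ g * t ^ i} = ⊤ := by
  classical
  set T : Set H := {x : H | ∃ g i, x = δ g * t ^ i} with hT
  have hmemδ : ∀ g, δ g ∈ Submodule.span k T :=
    fun g => Submodule.subset_span ⟨g, 0, by simp⟩
  have hone : (1 : H) ∈ Submodule.span k T := by
    rw [← hδsum]
    exact Submodule.sum_mem _ fun g _ => hmemδ g
  have hmemt : t ∈ Submodule.span k T := by
    rw [← one_mul t, ← hδsum, Finset.sum_mul]
    exact Submodule.sum_mem _ fun g _ =>
      Submodule.subset_span ⟨g, 1, by rw [pow_one]⟩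
  have hmul : ∀ x ∈ Submodule.span k T, ∀ z ∈ Submodule.span k T,
      x * z ∈ Submodule.span k T := by
    intro x hx z hz
    have : Submodule.span k T * Submodule.span k T ≤ Submodule.span k T := by
      rw [Submodule.span_mul_span]
      apply Submodule.span_le.mpr
      rintro _ ⟨_, ⟨g, i, rfl⟩, _, ⟨h, j, rfl⟩, rfl⟩
      show δ g * t ^ i * (δ h * t ^ j) ∈ (Submodule.span k T : Set H)
      have : δ g * t ^ i * (δ h * t ^ j)
          = (if g = c ^ i * h * (c ^ i)⁻¹ then δ g else 0) * t ^ (i + j) := by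
        rw [mul_assoc, ← mul_assoc (t ^ i), aux_tpow_delta c δ t htδ, ← mul_assoc,
          ← mul_assoc, hδmul, pow_add, mul_assoc]
      rw [this]
      split
      · exact Submodule.subset_span ⟨g, i + j, rfl⟩
      · simp only [zero_mul]; exact Submodule.zero_mem _
    exact this (Submodule.mul_mem_mul hx hz)
  rw [eq_top_iff]
  intro x hx'
  clear hx'
  have hx : x ∈ Algebra.adjoin k (Set.range δ ∪ {t}) := by rw [hgen]; trivial
  induction hx using Algebra.adjoin_induction with
  | mem z hz =>
    rcases hz with ⟨g, rfl⟩ | hz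
    · exact hmemδ g
    · rw [Set.mem_singleton_iff] at hz; rw [hz]; exact hmemt
  | algebraMap r =>
    rw [Algebra.algebraMap_eq_smul_one]
    exact Submodule.smul_mem _ r hone
  | add u v _ _ hu hv => exact Submodule.add_mem _ hu hv
  | mul u v _ _ hu hv => exact hmul u hu v hv

end SpanAux

lemma grp {G : Type*} [Group G] (u w g : G) :
    u = (w⁻¹ * (u⁻¹ * g))⁻¹ ↔ g = u * w * u⁻¹ := by
  constructor
  · intro h
    have h2 : w⁻¹ * (u⁻¹ * g) = u⁻¹ := by conv_rhs => rw [h, inv_inv]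
    have h3 : g = u * (w * u⁻¹) := by
      rw [← inv_mul_eq_iff_eq_mul, ← inv_mul_eq_iff_eq_mul]
      exact h2
    rw [h3, mul_assoc]
  · intro h
    rw [h]
    group

lemma conjSwap_coe {n : ℕ} (w : Equiv.Perm (Fin n)) (τ : {s : Equiv.Perm (Fin n) // s.IsSwap}) :
    (↑(conjSwap w τ) : Equiv.Perm (Fin n)) = w⁻¹ * ↑τ * w := rfl

lemma sign_conj3 (q p : Equiv.Perm (Fin 3)) :
    Equiv.Perm.sign (q * p * q⁻¹) = Equiv.Perm.sign p := by
  simp only [map_mul, map_inv]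
  exact mul_inv_cancel_comm _ _

section QuadAux
variable {k : Type*} [Field k] {H : Type*} [Ring H] [HopfAlgebra k H]
variable (c : Equiv.Perm (Fin 3)) (δ : Equiv.Perm (Fin 3) → H) (t : H)

lemma aux_quad
    (hδsum : ∑ ω : Equiv.Perm (Fin 3), δ ω = 1)
    (hδmul : ∀ ω ω', δ ω * δ ω' = if ω = ω' then δ ω else 0)
    (hΔδ : ∀ g, Coalgebra.comul (R := k) (δ g)
        = ∑ a : Equiv.Perm (Fin 3), δ a ⊗ₜ[k] δ (a⁻¹ * g))
    (hεδ : ∀ g, Coalgebra.counit (R := k) (δ g) = if g = 1 then (1 : k) else 0)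
    (hΔt : Coalgebra.comul (R := k) t = t ⊗ₜ[k] t)
    (hεt : Coalgebra.counit (R := k) t = 1)
    (htm : t ^ orderOf c = 1)
    (htδ : ∀ g, t * δ g = δ (c * g * c⁻¹) * t)
    (a ω v : Equiv.Perm (Fin 3)) (i : ℕ) :
    δ a * t ^ i * δ ω * HopfAlgebra.antipode (R := k) (δ v * t ^ i)
      = if a = c ^ i * ω * (c ^ i)⁻¹ then (if a = v⁻¹ then δ a else 0) else 0 := by
  rw [aux_antipode_e c δ t hδsum hδmul hΔδ hεδ hΔt hεt htm,
    mul_assoc (δ a), aux_tpow_delta c δ t htδ, ← mul_assoc (δ a),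
    mul_assoc (δ a * δ (c ^ i * ω * (c ^ i)⁻¹)), ← mul_assoc (t ^ i),
    aux_t_inv c t htm, one_mul, hδmul, ite_mul, zero_mul, hδmul]

end QuadAux

section Core
variable {k : Type*} [Field k] {H : Type*} [Ring H] [HopfAlgebra k H]
variable {V : Type*} [AddCommGroup V] [Module k V]

theorem core
    (c : Equiv.Perm (Fin 3))
    (δ : Equiv.Perm (Fin 3) → H) (t : H)
    (hδsum : ∑ ω : Equiv.Perm (Fin 3), δ ω = 1)
    (hδmul : ∀ ω ω', δ ω * δ ω' = if ω = ω' then δ ω else 0)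
    (hΔδ : ∀ g, Coalgebra.comul (R := k) (δ g)
        = ∑ a : Equiv.Perm (Fin 3), δ a ⊗ₜ[k] δ (a⁻¹ * g))
    (hεδ : ∀ g, Coalgebra.counit (R := k) (δ g) = if g = 1 then (1 : k) else 0)
    (hΔt : Coalgebra.comul (R := k) t = t ⊗ₜ[k] t)
    (hεt : Coalgebra.counit (R := k) t = 1)
    (htm : t ^ orderOf c = 1)
    (htδ : ∀ g, t * δ g = δ (c * g * c⁻¹) * t)
    (act : H →ₗ[k] V →ₗ[k] V)
    (hact1 : ∀ v, act 1 v = v)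
    (hactmul : ∀ g h v, act (g * h) v = act g (act h v))
    (y : {s : Equiv.Perm (Fin 3) // s.IsSwap} → V)
    (hactδ : ∀ τ' η, act (δ τ') (y η) = if τ' = η.1 then y η else 0)
    (hactt : ∀ η, act t (y η) = y (conjSwap c⁻¹ η))
    (coact : V →ₗ[k] H ⊗[k] V)
    (hcoact : ∀ η, coact (y η)
        = ∑ ω : Equiv.Perm (Fin 3),
            ((Equiv.Perm.sign ω : ℤ) : k) • (δ ω ⊗ₜ[k] y (conjSwap ω η)))
    (g : Equiv.Perm (Fin 3)) (i : ℕ) (η : {s : Equiv.Perm (Fin 3) // s.IsSwap}) :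
    ydLHS act coact ((δ g * t ^ i) ⊗ₜ[k] y η)
      = ydRHS act coact ((δ g * t ^ i) ⊗ₜ[k] y η) := by
  classical
  rw [ydLHS, ydRHS]
  simp only [coe_comp, Function.comp_apply, lift.tmul]
  rw [aux_act_e c δ t act y hact1 hactmul hactδ hactt, apply_ite coact, map_zero, hcoact]
  rw [map_tmul]
  simp only [comp_apply]
  rw [aux_comul_e δ t hΔδ hΔt, hcoact, map_sum]
  simp only [lTensor_tmul, aux_comul_e δ t hΔδ hΔt]
  simp only [sum_tmul, tmul_sum, tmul_smul, map_sum, map_smul, LinearEquiv.coe_coe,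
    map_tmul, lTensor_tmul, comm_tmul, assoc_symm_tmul, assoc_tmul,
    tensorTensorTensorComm_tmul, id_coe, id_eq, lift.tmul, sandwich_tmul]
  simp only [aux_quad c δ t hδsum hδmul hΔδ hεδ hΔt hεt htm htδ,
    aux_act_e c δ t act y hact1 hactmul hactδ hactt]
  simp only [tmul_ite]
  simp only [Finset.sum_ite_eq', Finset.mem_univ, if_true]
  simp only [ite_tmul]
  simp only [Finset.sum_ite_eq', Finset.mem_univ, if_true]
  by_cases hP : g = ↑(conjSwap (c ^ i)⁻¹ η)
  · rw [if_pos hP]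
    subst hP
    refine Fintype.sum_equiv ((MulAut.conj ((c ^ i)⁻¹)).toEquiv) _ _ fun x => ?_
    have hex : ∀ z : Equiv.Perm (Fin 3),
        (MulAut.conj ((c ^ i)⁻¹)).toEquiv z = (c ^ i)⁻¹ * z * ((c ^ i)⁻¹)⁻¹ := fun _ => rfl
    simp only [hex]
    split_ifs with h
    · have e1 : c ^ i * ((c ^ i)⁻¹ * x * ((c ^ i)⁻¹)⁻¹) * (c ^ i)⁻¹ = x := by group
      have e3 : conjSwap (c ^ i)⁻¹ (conjSwap ((c ^ i)⁻¹ * x * ((c ^ i)⁻¹)⁻¹) η)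
          = conjSwap x (conjSwap (c ^ i)⁻¹ η) :=
        Subtype.ext (by simp only [conjSwap_coe]; group)
      rw [e1, e3, sign_conj3]
    · exact absurd (by rw [grp]; simp only [conjSwap_coe]; group) h
  · rw [if_neg hP]
    symm
    apply Finset.sum_eq_zero
    intro x _
    rw [if_neg, smul_zero]
    intro hcond
    exact hP (((grp _ _ _).mp hcond).trans (by simp only [conjSwap_coe]; group))

end Core

/-! STATEMENT 15: let `H' = k^{S_3} * kC_m` be the abelian extension attached to
the matched pair `(C_m, S_3)`, `m ∈ {2,3}` (with `C_m` generated by `c = (12)`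
or `c = (123)`), and let `V` be spanned by `{y_η : η ∈ X}` (X the transpositions
of `S_3`) with the standard `k^{S_3}`-Yetter–Drinfeld structure, with the action
extended by `f · y_η = y_{fηf⁻¹}` for `f ∈ C_m`.  Then `V` is a Yetter–Drinfeld
module over `H'`: `δ(h·v) = h₁ v₍₋₁₎ S(h₃) ⊗ h₂ · v₍₀₎`. -/
theorem matched_pair_yd
    {k : Type*} [Field k] [IsAlgClosed k] [CharZero k]
    {H : Type*} [Ring H] [HopfAlgebra k H]
    {V : Type*} [AddCommGroup V] [Module k V]
    (c : Equiv.Perm (Fin 3))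
    (hc : c = Equiv.swap (0 : Fin 3) 1 ∨ c = finRotate 3)
    (δ : Equiv.Perm (Fin 3) → H) (t : H)
    -- `H = k^{S_3} * kC_m`:
    (hδsum : ∑ ω : Equiv.Perm (Fin 3), δ ω = 1)
    (hδmul : ∀ ω ω', δ ω * δ ω' = if ω = ω' then δ ω else 0)
    (hΔδ : ∀ g, Coalgebra.comul (R := k) (δ g)
        = ∑ a : Equiv.Perm (Fin 3), δ a ⊗ₜ[k] δ (a⁻¹ * g))
    (hεδ : ∀ g, Coalgebra.counit (R := k) (δ g) = if g = 1 then (1 : k) else 0)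
    (hΔt : Coalgebra.comul (R := k) t = t ⊗ₜ[k] t)
    (hεt : Coalgebra.counit (R := k) t = 1)
    (htm : t ^ orderOf c = 1)
    (htδ : ∀ g, t * δ g = δ (c * g * c⁻¹) * t)
    (hgen : Algebra.adjoin k (Set.range δ ∪ {t}) = ⊤)
    -- the module and comodule structure on `V`:
    (act : H →ₗ[k] V →ₗ[k] V)
    (hact1 : ∀ v, act 1 v = v)
    (hactmul : ∀ g h v, act (g * h) v = act g (act h v))
    (y : {s : Equiv.Perm (Fin 3) // s.IsSwap} → V)
    (hspan : Submodule.span k (Set.range y) = ⊤)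
    (hactδ : ∀ τ' η, act (δ τ') (y η) = if τ' = η.1 then y η else 0)
    (hactt : ∀ η, act t (y η) = y (conjSwap c⁻¹ η))
    (coact : V →ₗ[k] H ⊗[k] V)
    (hcoact : ∀ η, coact (y η)
        = ∑ ω : Equiv.Perm (Fin 3),
            ((Equiv.Perm.sign ω : ℤ) : k) • (δ ω ⊗ₜ[k] y (conjSwap ω η))) :
    ydLHS act coact = ydRHS act coact := by
  classical
  apply TensorProduct.ext'
  intro h v
  have hv : v ∈ Submodule.span k (Set.range y) := by rw [hspan]; trivial
  have hh : h ∈ Submodule.span k {x : H | ∃ g i, x = δ g * t ^ i} := by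
    rw [aux_span c δ t hδsum hδmul htδ hgen]; trivial
  induction hh using Submodule.span_induction with
  | mem x hx =>
    obtain ⟨g', i, rfl⟩ := hx
    induction hv using Submodule.span_induction with
    | mem w hw =>
      obtain ⟨η, rfl⟩ := hw
      exact core c δ t hδsum hδmul hΔδ hεδ hΔt hεt htm htδ act hact1 hactmul y
        hactδ hactt coact hcoact g' i η
    | zero => rw [TensorProduct.tmul_zero, map_zero, map_zero]
    | add u w _ _ ihu ihw => rw [TensorProduct.tmul_add, map_add, map_add, ihu, ihw]
    | smul r u _ ihu => rw [TensorProduct.tmul_smul, map_smul, map_smul, ihu]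
  | zero => rw [TensorProduct.zero_tmul, map_zero, map_zero]
  | add u w _ _ ihu ihw => rw [TensorProduct.add_tmul, map_add, map_add, ihu, ihw]
  | smul r u _ ihu => rw [← TensorProduct.smul_tmul', map_smul, map_smul, ihu]


end MatchedPair
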